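/- For complex q with 0 < |q| < 1, nonnegative integer s, and complex t, z with |t| and |tzq^s| less than 1, the generating function of the q-Cesàro polynomials satisfies ∑_{n=0}^∞ g_n^{(s)}(z;q) t^n = 1 / ((1 - t z q^s) · (t;q)_{s+1}), where g_n^{(s)}(z;q) = ∑_{k=0}^n [k+s choose s]_q (z q^s)^{n-k}. -/

import Mathlib

/-- The finite q-Pochhammer symbol `(a;q)_n = ∏_{j=0}^{n-1} (1 - a q^j)`. -/
noncomputable def qPoch (a q : ℂ) (n : ℕ) : ℂ :=
  ∏ j ∈ Finset.range n, (1 - a * q ^ j)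

/-- The q-binomial coefficient `[m choose r]_q = (q;q)_m/((q;q)_r (q;q)_{m-r})`. -/
noncomputable def qBinom (q : ℂ) (m r : ℕ) : ℂ :=
  qPoch q q m / (qPoch q q r * qPoch q q (m - r))

/-- The q-Cesàro polynomial `g_n^{(s)}(z;q) = ∑_{k=0}^n [k+s choose s]_q (zq^s)^{n-k}`. -/
noncomputable def qCesaro (q z : ℂ) (s n : ℕ) : ℂ :=
  ∑ k ∈ Finset.range (n + 1), qBinom q (k + s) s * (z * q ^ s) ^ (n - k)

lemma qPoch_zero (a q : ℂ) : qPoch a q 0 = 1 := by simp [qPoch]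

lemma qPoch_succ (a q : ℂ) (n : ℕ) :
    qPoch a q (n + 1) = qPoch a q n * (1 - a * q ^ n) :=
  Finset.prod_range_succ _ _

lemma qPoch_succ' (a q : ℂ) (n : ℕ) :
    qPoch a q (n + 1) = (1 - a) * qPoch (a * q) q n := by
  rw [qPoch, Finset.prod_range_succ', qPoch]
  simp only [pow_zero, mul_one, pow_succ']
  rw [mul_comm]
  congr 1
  refine Finset.prod_congr rfl fun j _ => ?_
  ring

lemma qPoch_ne_zero {q : ℂ} (hq1 : ‖q‖ < 1) (n : ℕ) :
    qPoch q q n ≠ 0 := by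
  rw [qPoch, Finset.prod_ne_zero_iff]
  intro j _
  intro h
  have h1 : q * q ^ j = 1 := by
    have := sub_eq_zero.mp h
    linear_combination -this
  have : ‖q * q ^ j‖ < 1 := by
    rw [norm_mul, norm_pow]
    calc ‖q‖ * ‖q‖ ^ j ≤ ‖q‖ * 1 := by
          exact mul_le_mul_of_nonneg_left (pow_le_one₀ (norm_nonneg q) hq1.le)
            (norm_nonneg q)
      _ = ‖q‖ := mul_one _
      _ < 1 := hq1
  rw [h1] at this
  simp at this

lemma qBinom_eq {q : ℂ} (hq1 : ‖q‖ < 1) (k s : ℕ) :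
    qBinom q (k + s) s = (∏ j ∈ Finset.range s, (1 - q * q ^ (k + j))) / qPoch q q s := by
  rw [qBinom, Nat.add_sub_cancel]
  rw [show qPoch q q (k + s) = qPoch q q k * ∏ j ∈ Finset.range s, (1 - q * q ^ (k + j)) from
    Finset.prod_range_add _ k s]
  rw [div_eq_div_iff (by exact mul_ne_zero (qPoch_ne_zero hq1 s) (qPoch_ne_zero hq1 k))
    (qPoch_ne_zero hq1 s)]
  ring

lemma qBinom_zero_add {q : ℂ} (hq1 : ‖q‖ < 1) (s : ℕ) :
    qBinom q (0 + s) s = 1 := by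
  rw [qBinom_eq hq1]
  simp only [Nat.zero_add]
  exact div_self (qPoch_ne_zero hq1 s)

set_option maxHeartbeats 1000000 in
lemma qBinom_norm_le {q : ℂ} (hq1 : ‖q‖ < 1) (k s : ℕ) :
    ‖qBinom q (k + s) s‖ ≤ 2 ^ s / ‖qPoch q q s‖ := by
  rw [qBinom_eq hq1, norm_div]
  have hpos : 0 < ‖qPoch q q s‖ := norm_pos_iff.mpr (qPoch_ne_zero hq1 s)
  refine (div_le_div_iff_of_pos_right hpos).mpr ?_
  calc ‖∏ j ∈ Finset.range s, (1 - q * q ^ (k + j))‖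
      ≤ ∏ j ∈ Finset.range s, ‖1 - q * q ^ (k + j)‖ := (norm_prod _ _).le
    _ ≤ ∏ _j ∈ Finset.range s, (2 : ℝ) := by
        refine Finset.prod_le_prod (fun j _ => norm_nonneg _) (fun j _ => ?_)
        calc ‖1 - q * q ^ (k + j)‖ ≤ ‖(1 : ℂ)‖ + ‖q * q ^ (k + j)‖ := norm_sub_le _ _
          _ ≤ 1 + 1 := by
              refine add_le_add (by simp) ?_
              rw [norm_mul, norm_pow]
              have h1 : ‖q‖ ≤ 1 := le_of_lt hq1
              have h2 : ‖q‖ ^ (k + j) ≤ 1 := pow_le_one₀ (norm_nonneg q) h1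
              calc ‖q‖ * ‖q‖ ^ (k + j) ≤ 1 * 1 := mul_le_mul h1 h2 (by positivity) one_pos.le
                _ = 1 := one_mul 1
          _ = 2 := by norm_num
    _ = 2 ^ s := by simp

lemma one_sub_q_pow_ne_zero {q : ℂ} (hq1 : ‖q‖ < 1) (n : ℕ) :
    (1 : ℂ) - q * q ^ n ≠ 0 := by
  have h := qPoch_ne_zero hq1 (n + 1)
  rw [qPoch_succ] at h
  exact right_ne_zero_of_mul h

lemma summable_norm_qBinom {q t : ℂ} (hq1 : ‖q‖ < 1) (s : ℕ)
    (ht : ‖t‖ < 1) :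
    Summable (fun k => ‖qBinom q (k + s) s * t ^ k‖) := by
  refine Summable.of_nonneg_of_le (fun k => norm_nonneg _)
    (fun k => ?_) (((summable_geometric_of_lt_one (norm_nonneg t) ht).mul_left
      (2 ^ s / ‖qPoch q q s‖)))
  rw [norm_mul, norm_pow]
  exact mul_le_mul_of_nonneg_right (qBinom_norm_le hq1 k s) (by positivity)

lemma summable_qBinom {q t : ℂ} (hq1 : ‖q‖ < 1) (s : ℕ)
    (ht : ‖t‖ < 1) :
    Summable (fun k => qBinom q (k + s) s * t ^ k) :=
  (summable_norm_qBinom hq1 s ht).of_norm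

lemma qBinom_pascal {q : ℂ} (hq1 : ‖q‖ < 1) (s m : ℕ) :
    qBinom q (m + 1 + (s + 1)) (s + 1)
      = qBinom q (m + (s + 1)) (s + 1) + q ^ (m + 1) * qBinom q (m + 1 + s) s := by
  have hs := qPoch_ne_zero hq1 s
  have hm := qPoch_ne_zero hq1 m
  have hfs := one_sub_q_pow_ne_zero hq1 s
  have hfm := one_sub_q_pow_ne_zero hq1 m
  rw [qBinom, qBinom, qBinom, Nat.add_sub_cancel, Nat.add_sub_cancel, Nat.add_sub_cancel]
  rw [show m + 1 + (s + 1) = (m + (s + 1)) + 1 by ring, qPoch_succ,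
    show m + 1 + s = m + (s + 1) by ring,
    show m + 1 = m + 1 from rfl, qPoch_succ q q m, qPoch_succ q q s]
  field_simp
  ring

lemma tsum_qBinom {q : ℂ} (hq1 : ‖q‖ < 1) (s : ℕ) :
    ∀ t : ℂ, ‖t‖ < 1 → ∑' k : ℕ, qBinom q (k + s) s * t ^ k = 1 / qPoch t q (s + 1) := by
  induction s with
  | zero =>
    intro t ht
    have h1 : ∀ k : ℕ, qBinom q (k + 0) 0 * t ^ k = t ^ k := by
      intro k
      rw [qBinom]
      simp only [Nat.add_zero, Nat.sub_zero, qPoch_zero, one_mul]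
      rw [div_self (qPoch_ne_zero hq1 k), one_mul]
    rw [tsum_congr h1, tsum_geometric_of_norm_lt_one ht]
    simp [qPoch, one_div]
  | succ s ih =>
    intro t ht
    have hq1' : ‖q‖ < 1 := by exact hq1
    have hqt : ‖q * t‖ < 1 := by
      rw [norm_mul]
      calc ‖q‖ * ‖t‖ < 1 * 1 := by
            exact mul_lt_mul'' hq1' ht (norm_nonneg q) (norm_nonneg t)
        _ = 1 := one_mul 1
    have hF := summable_qBinom (t := t) hq1 (s + 1) ht
    have hG := summable_qBinom (t := q * t) hq1 s hqt
    set F := ∑' k : ℕ, qBinom q (k + (s + 1)) (s + 1) * t ^ k with hFdef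
    have hG' : (∑' k : ℕ, qBinom q (k + s) s * (q * t) ^ k) = 1 / qPoch (q * t) q (s + 1) :=
      ih (q * t) hqt
    have hstep : ∀ k : ℕ, qBinom q (k + 1 + (s + 1)) (s + 1) * t ^ (k + 1)
        = (qBinom q (k + (s + 1)) (s + 1) * t ^ k) * t
          + qBinom q (k + 1 + s) s * (q * t) ^ (k + 1) := by
      intro k
      rw [qBinom_pascal hq1 s k, mul_pow]
      ring
    have h0 : F = qBinom q (0 + (s + 1)) (s + 1) * t ^ 0
        + ∑' k : ℕ, qBinom q (k + 1 + (s + 1)) (s + 1) * t ^ (k + 1) :=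
      Summable.tsum_eq_zero_add hF
    have hshift : Summable (fun k : ℕ => qBinom q (k + 1 + s) s * (q * t) ^ (k + 1)) := by
      have := (summable_nat_add_iff 1).mpr hG
      simpa using this
    have h2 : (∑' k : ℕ, qBinom q (k + 1 + (s + 1)) (s + 1) * t ^ (k + 1))
        = F * t + ((1 / qPoch (q * t) q (s + 1)) - 1) := by
      rw [tsum_congr hstep, Summable.tsum_add (hF.mul_right t) hshift, tsum_mul_right]
      congr 1
      have h3 : (∑' k : ℕ, qBinom q (k + s) s * (q * t) ^ k)
          = qBinom q (0 + s) s * (q * t) ^ 0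
            + ∑' k : ℕ, qBinom q (k + 1 + s) s * (q * t) ^ (k + 1) :=
        Summable.tsum_eq_zero_add hG
      rw [qBinom_zero_add hq1, pow_zero, mul_one] at h3
      rw [hG'] at h3
      linear_combination -h3
    have hb : qBinom q (0 + (s + 1)) (s + 1) = 1 := qBinom_zero_add hq1 (s + 1)
    have h0' : F = 1 + (F * t + (1 / qPoch (q * t) q (s + 1) - 1)) := by
      linear_combination h0 + h2 + hb
    have ht1 : (1 : ℂ) - t ≠ 0 := by
      refine sub_ne_zero.mpr ?_
      intro h
      rw [← h] at ht
      simp at ht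
    have hFt : F = (1 / qPoch (q * t) q (s + 1)) / (1 - t) := by
      rw [eq_div_iff ht1]
      linear_combination h0'
    rw [hFt, qPoch_succ' t q (s + 1), mul_comm t q, div_div]
    ring

/-- Generating function of the q-Cesàro polynomials:
`∑_{n=0}^∞ g_n^{(s)}(z;q) t^n = 1/((1 - tzq^s)(t;q)_{s+1})`. -/
theorem qCesaro_genfun (q z t : ℂ) (hq0 : 0 < ‖q‖)
    (hq1 : ‖q‖ < 1) (s : ℕ) (ht : ‖t‖ < 1)
    (htz : ‖t * z * q ^ s‖ < 1) :
    ∑' n : ℕ, qCesaro q z s n * t ^ n =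
      1 / ((1 - t * z * q ^ s) * qPoch t q (s + 1)) := by
  have ht' : ‖t‖ < 1 := by exact ht
  have htz' : ‖t * z * q ^ s‖ < 1 := by exact htz
  have hf : Summable (fun k => ‖qBinom q (k + s) s * t ^ k‖) :=
    summable_norm_qBinom hq1 s ht'
  have hg : Summable (fun m => ‖(t * z * q ^ s) ^ m‖) := by
    simpa [norm_pow] using summable_geometric_of_lt_one (norm_nonneg (t * z * q ^ s)) htz'
  have key := tsum_mul_tsum_eq_tsum_sum_range_of_summable_norm hf hg
  have hcongr : ∀ n : ℕ, qCesaro q z s n * t ^ n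
      = ∑ k ∈ Finset.range (n + 1),
          (qBinom q (k + s) s * t ^ k) * (t * z * q ^ s) ^ (n - k) := by
    intro n
    rw [qCesaro, Finset.sum_mul]
    refine Finset.sum_congr rfl fun k hk => ?_
    have hk' : k ≤ n := Nat.lt_succ_iff.mp (Finset.mem_range.mp hk)
    have h2 : t ^ k * t ^ (n - k) = t ^ n := by
      rw [← pow_add]
      congr 1
      omega
    linear_combination (-(qBinom q (k + s) s * (z * q ^ s) ^ (n - k))) * h2
  rw [tsum_congr hcongr, ← key, tsum_qBinom hq1 s t ht',
    tsum_geometric_of_norm_lt_one htz', one_div, ← mul_inv, one_div, mul_comm]
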